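/- The generating function T(z) = Σ_{n≥0} t(n) z^n of λυ-terms satisfies the algebraic equation T(z) = z/(1-z) + z·T(z) + z·T(z)² + z·T(z)·S(z), where S(z) = Σ s(n) z^n is the generating function of substitutions satisfying S(z) = z·T(z) + z·S(z) + z. Consequently, as formal power series, T(z) = C(z) - 1 and S(z) = C(z)·z/(1-z), where C(z) = Σ_{n≥0} C(n) z^n is the Catalan generating function satisfying C(z) = 1 + z·C(z)². -/

import Mathlib

open Finset Filter

mutual
inductive Tm : Type
  | idx : Nat → Tm
  | lam : Tm → Tm
  | app : Tm → Tm → Tm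
  | clos : Tm → Subst → Tm
inductive Subst : Type
  | slash : Tm → Subst
  | lift : Subst → Subst
  | shift : Subst
end

mutual
/-- Natural size of a λυ-term: every constructor weighs 1; index n has size n+1. -/
def Tm.size : Tm → Nat
  | .idx n => n + 1
  | .lam a => Tm.size a + 1
  | .app a b => Tm.size a + Tm.size b + 1
  | .clos a s => Tm.size a + Subst.size s + 1
/-- Natural size of an explicit substitution. -/
def Subst.size : Subst → Nat
  | .slash a => Tm.size a + 1
  | .lift s => Subst.size s + 1
  | .shift => 1
end

def sliceEquiv {α β : Type} (f : α → ℕ) (g : β → ℕ) (n : ℕ) :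
    {p : α × β // f p.1 + g p.2 = n} ≃
      Σ i : Fin (n+1), {a : α // f a = i} × {b : β // g b = n - i} where
  toFun p := ⟨⟨f p.1.1, by omega⟩, ⟨p.1.1, rfl⟩, ⟨p.1.2, by have := p.2; simp; omega⟩⟩
  invFun := fun ⟨⟨i, hi⟩, ⟨a, ha⟩, ⟨b, hb⟩⟩ => ⟨(a, b), by simp at ha hb ⊢; omega⟩
  left_inv p := rfl
  right_inv := by
    rintro ⟨⟨i, hi⟩, ⟨a, ha⟩, ⟨b, hb⟩⟩
    simp only [Fin.val_mk] at ha hb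
    subst ha
    rfl

def tmEquiv (n : ℕ) : {a : Tm // a.size = n+1} ≃
    (Unit ⊕ {a : Tm // a.size = n} ⊕ {p : Tm × Tm // p.1.size + p.2.size = n}
      ⊕ {p : Tm × Subst // p.1.size + p.2.size = n}) where
  toFun x := match x with
    | ⟨.idx _, _⟩ => .inl Unit.unit
    | ⟨.lam a, h⟩ => .inr (.inl ⟨a, by simpa [Tm.size] using h⟩)
    | ⟨.app a b, h⟩ => .inr (.inr (.inl ⟨(a, b), by simp [Tm.size] at h ⊢; omega⟩))
    | ⟨.clos a s, h⟩ => .inr (.inr (.inr ⟨(a, s), by simp [Tm.size] at h ⊢; omega⟩))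
  invFun y := match y with
    | .inl _ => ⟨.idx n, rfl⟩
    | .inr (.inl ⟨a, h⟩) => ⟨.lam a, by simp [Tm.size, h]⟩
    | .inr (.inr (.inl ⟨(a, b), h⟩)) => ⟨.app a b, by simp [Tm.size] at h ⊢; omega⟩
    | .inr (.inr (.inr ⟨(a, s), h⟩)) => ⟨.clos a s, by simp [Tm.size] at h ⊢; omega⟩
  left_inv := by
    rintro ⟨a, h⟩
    cases a with
    | idx k =>
      obtain rfl : k = n := by simpa [Tm.size] using h
      rfl
    | lam a => rfl
    | app a b => rfl
    | clos a s => rfl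
  right_inv := by
    rintro (⟨⟩ | ⟨a, h⟩ | ⟨⟨a, b⟩, h⟩ | ⟨⟨a, s⟩, h⟩) <;> rfl

def substEquiv (n : ℕ) : {s : Subst // s.size = n+1} ≃
    ({a : Tm // a.size = n} ⊕ {s : Subst // s.size = n} ⊕ PLift (n = 0)) where
  toFun x := match x with
    | ⟨.slash a, h⟩ => .inl ⟨a, by simpa [Subst.size] using h⟩
    | ⟨.lift s, h⟩ => .inr (.inl ⟨s, by simpa [Subst.size] using h⟩)
    | ⟨.shift, h⟩ => .inr (.inr ⟨by simp [Subst.size] at h; omega⟩)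
  invFun y := match y with
    | .inl ⟨a, h⟩ => ⟨.slash a, by simp [Subst.size, h]⟩
    | .inr (.inl ⟨s, h⟩) => ⟨.lift s, by simp [Subst.size, h]⟩
    | .inr (.inr ⟨h⟩) => ⟨.shift, by simp [Subst.size, h]⟩
  left_inv := by
    rintro ⟨s, h⟩
    cases s <;> rfl
  right_inv := by
    rintro (⟨a, h⟩ | ⟨s, h⟩ | ⟨h⟩) <;> rfl

theorem finite_all (n : ℕ) :
    Finite {a : Tm // Tm.size a = n} ∧ Finite {s : Subst // Subst.size s = n} := by
  induction n using Nat.strong_induction_on with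
  | _ n ih =>
    rcases n with _ | m
    · constructor
      · haveI : IsEmpty {a : Tm // Tm.size a = 0} :=
          ⟨by rintro ⟨a, h⟩; cases a <;> simp [Tm.size] at h⟩
        exact Finite.of_subsingleton
      · haveI : IsEmpty {s : Subst // Subst.size s = 0} :=
          ⟨by rintro ⟨s, h⟩; cases s <;> simp [Subst.size] at h⟩
        exact Finite.of_subsingleton
    · haveI I1 : ∀ i : Fin (m + 1), Finite {a : Tm // Tm.size a = (i : ℕ)} :=
        fun i => (ih i (by omega)).1
      haveI I2 : ∀ i : Fin (m + 1), Finite {a : Tm // Tm.size a = m - (i : ℕ)} :=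
        fun i => (ih (m - i) (by omega)).1
      haveI I3 : ∀ i : Fin (m + 1), Finite {s : Subst // Subst.size s = m - (i : ℕ)} :=
        fun i => (ih (m - i) (by omega)).2
      haveI Im : Finite {a : Tm // Tm.size a = m} := (ih m (by omega)).1
      haveI Ims : Finite {s : Subst // Subst.size s = m} := (ih m (by omega)).2
      haveI : Finite {p : Tm × Tm // Tm.size p.1 + Tm.size p.2 = m} :=
        Finite.of_equiv _ (sliceEquiv Tm.size Tm.size m).symm
      haveI : Finite {p : Tm × Subst // Tm.size p.1 + Subst.size p.2 = m} :=
        Finite.of_equiv _ (sliceEquiv Tm.size Subst.size m).symm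
      exact ⟨Finite.of_equiv _ (tmEquiv m).symm, Finite.of_equiv _ (substEquiv m).symm⟩

instance (n : ℕ) : Finite {a : Tm // Tm.size a = n} := (finite_all n).1
instance (n : ℕ) : Finite {s : Subst // Subst.size s = n} := (finite_all n).2

lemma card_slice {α β : Type} (f : α → ℕ) (g : β → ℕ) (n : ℕ)
    [∀ k, Finite {a : α // f a = k}] [∀ k, Finite {b : β // g b = k}] :
    Nat.card {p : α × β // f p.1 + g p.2 = n}
      = ∑ i ∈ range (n + 1), Nat.card {a : α // f a = i} * Nat.card {b : β // g b = n - i} := by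
  rw [Nat.card_congr (sliceEquiv f g n)]
  letI : ∀ i : Fin (n + 1), Fintype ({a : α // f a = (i : ℕ)} × {b : β // g b = n - (i : ℕ)}) :=
    fun i => Fintype.ofFinite _
  rw [Nat.card_eq_fintype_card, Fintype.card_sigma]
  simp only [← Nat.card_eq_fintype_card, Nat.card_prod]
  rw [Fin.sum_univ_eq_sum_range
    (fun i => Nat.card {a : α // f a = i} * Nat.card {b : β // g b = n - i})]

instance (n : ℕ) : Finite {p : Tm × Tm // Tm.size p.1 + Tm.size p.2 = n} :=
  Finite.of_equiv _ (sliceEquiv Tm.size Tm.size n).symm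
instance (n : ℕ) : Finite {p : Tm × Subst // Tm.size p.1 + Subst.size p.2 = n} :=
  Finite.of_equiv _ (sliceEquiv Tm.size Subst.size n).symm

/-- Number of λυ-terms of size `n`. -/
noncomputable def tcount (n : ℕ) : ℕ := Nat.card {a : Tm // Tm.size a = n}

/-- Number of explicit substitutions of size `n`. -/
noncomputable def scount (n : ℕ) : ℕ := Nat.card {s : Subst // Subst.size s = n}

lemma tcount_zero : tcount 0 = 0 := by
  haveI : IsEmpty {a : Tm // Tm.size a = 0} :=
    ⟨by rintro ⟨a, h⟩; cases a <;> simp [Tm.size] at h⟩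
  simp [tcount]

lemma scount_zero : scount 0 = 0 := by
  haveI : IsEmpty {s : Subst // Subst.size s = 0} :=
    ⟨by rintro ⟨s, h⟩; cases s <;> simp [Subst.size] at h⟩
  simp [scount]

lemma tcount_succ (n : ℕ) :
    tcount (n + 1) = 1 + tcount n + (∑ i ∈ range (n + 1), tcount i * tcount (n - i))
      + ∑ i ∈ range (n + 1), tcount i * scount (n - i) := by
  unfold tcount scount
  rw [Nat.card_congr (tmEquiv n), Nat.card_sum, Nat.card_sum, Nat.card_sum,
    card_slice, card_slice, Nat.card_unique]
  ring

lemma scount_succ (n : ℕ) :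
    scount (n + 1) = tcount n + scount n + if n = 0 then 1 else 0 := by
  unfold tcount scount
  rw [Nat.card_congr (substEquiv n), Nat.card_sum, Nat.card_sum]
  rcases n with _ | m
  · haveI : Nonempty (PLift (0 = 0)) := ⟨⟨rfl⟩⟩
    rw [Nat.card_unique (α := PLift (0 = 0))]
    simp [Nat.add_assoc]
  · haveI : IsEmpty (PLift (m + 1 = 0)) := ⟨fun h => by cases h; omega⟩
    simp


open PowerSeries

/-- Generating function of λυ-terms. -/
noncomputable def Tz : PowerSeries ℚ := PowerSeries.mk fun n => (tcount n : ℚ)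

/-- Generating function of substitutions. -/
noncomputable def Sz : PowerSeries ℚ := PowerSeries.mk fun n => (scount n : ℚ)

/-- Catalan generating function. -/
noncomputable def Cz : PowerSeries ℚ := PowerSeries.mk fun n => (catalan n : ℚ)

lemma geom : ((1 : PowerSeries ℚ) - X)⁻¹ = PowerSeries.mk 1 :=
  ((PowerSeries.eq_inv_iff_mul_eq_one (by simp)).mpr
    (PowerSeries.mk_one_mul_one_sub_eq_one ℚ)).symm

lemma eq2 : Sz = X * Tz + X * Sz + X := by
  ext n
  rcases n with _ | m
  · simp [Sz, scount_zero]
  · simp only [Sz, Tz, map_add, coeff_succ_X_mul, coeff_mk, scount_succ, coeff_X]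
    push_cast
    rcases m with _ | k <;> simp

lemma eq1 : Tz = X * (1 - X)⁻¹ + X * Tz + X * Tz ^ 2 + X * Tz * Sz := by
  rw [geom]
  have hsq : X * Tz ^ 2 = X * (Tz * Tz) := by ring
  have hts : X * Tz * Sz = X * (Tz * Sz) := by ring
  rw [hsq, hts]
  ext n
  rcases n with _ | m
  · simp [Tz, tcount_zero]
  · rw [map_add, map_add, map_add, coeff_succ_X_mul, coeff_succ_X_mul,
      coeff_succ_X_mul, coeff_succ_X_mul, coeff_mul, coeff_mul]
    simp only [Tz, Sz, coeff_mk, Pi.one_apply]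
    rw [Finset.Nat.sum_antidiagonal_eq_sum_range_succ_mk,
      Finset.Nat.sum_antidiagonal_eq_sum_range_succ_mk, tcount_succ]
    push_cast
    ring

lemma eqC : Cz = 1 + X * Cz ^ 2 := by
  have hsq : X * Cz ^ 2 = X * (Cz * Cz) := by ring
  rw [hsq]
  ext n
  rcases n with _ | m
  · simp [Cz]
  · rw [map_add, coeff_succ_X_mul, coeff_mul]
    simp only [Cz, coeff_mk, coeff_one, Nat.succ_ne_zero, if_false, zero_add]
    rw [catalan_succ']
    push_cast
    rfl

/-- the generating-function equations and the Catalan closed forms. -/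
theorem stmt6 :
    Tz = X * (1 - X)⁻¹ + X * Tz + X * Tz ^ 2 + X * Tz * Sz ∧
    Sz = X * Tz + X * Sz + X ∧
    Cz = 1 + X * Cz ^ 2 ∧
    Tz = Cz - 1 ∧
    Sz = Cz * (X * (1 - X)⁻¹) := by
  have hU : ((1 : PowerSeries ℚ) - X) * (1 - X)⁻¹ = 1 :=
    PowerSeries.mul_inv_cancel _ (by simp)
  have key : Tz = X * (Tz + 1) ^ 2 := by
    linear_combination (1 - (X : PowerSeries ℚ)) * eq1 + (X * Tz) * eq2 + X * hU
  have e4 : Tz = Cz - 1 := by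
    have hfac : ((1 : PowerSeries ℚ) - X * (Cz + Tz + 1)) * (Cz - (Tz + 1)) = 0 := by
      linear_combination eqC - key
    rcases mul_eq_zero.mp hfac with h | h
    · exfalso
      have := congrArg (PowerSeries.constantCoeff (R := ℚ)) h
      simp at this
    · linear_combination -h
  have e5 : Sz = Cz * (X * (1 - X)⁻¹) := by
    have h2 : ((1 : PowerSeries ℚ) - X) * Sz = X * Cz := by
      linear_combination eq2 + X * e4
    have hS : Sz = (1 - X)⁻¹ * (((1 : PowerSeries ℚ) - X) * Sz) := by
      rw [← mul_assoc, PowerSeries.inv_mul_cancel _ (by simp), one_mul]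
    rw [hS, h2]; ring
  exact ⟨eq1, eq2, eqC, e4, e5⟩
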